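/- Let A be an n×d real matrix of rank ρ, let k < ρ, let A_k = U_kΣ_kV_kᵀ be the truncated SVD of A, and let R be a d×t real matrix such that the k×t matrix V_kᵀR has rank k. Then A_k·R·(V_kᵀR)⁺·V_kᵀ = A_k; equivalently, ‖A_k − A_kR(V_kᵀR)⁺V_kᵀ‖_F = 0. -/

import Mathlib

open MeasureTheory
open scoped Matrix

/-- Frobenius norm of a real matrix. -/
noncomputable def frobNorm {m n : ℕ} (M : Matrix (Fin m) (Fin n) ℝ) : ℝ :=
  Real.sqrt (∑ i, ∑ j, (M i j) ^ 2)

/-- Spectral (operator) norm of a real matrix, viewed as a linear map between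
Euclidean spaces. -/
noncomputable def specNorm {m n : ℕ} (M : Matrix (Fin m) (Fin n) ℝ) : ℝ :=
  ‖LinearMap.toContinuousLinearMap (Matrix.toEuclideanLin M)‖

/-- `P` is the Moore–Penrose pseudoinverse of `M` (the four Penrose conditions;
such a `P` is unique). -/
def IsMoorePenrose {m n : ℕ} (M : Matrix (Fin m) (Fin n) ℝ)
    (P : Matrix (Fin n) (Fin m) ℝ) : Prop :=
  M * P * M = M ∧ P * M * P = P ∧ (M * P)ᵀ = M * P ∧ (P * M)ᵀ = P * M

/-- `X` is an `n × k` cluster indicator matrix: each row `i` has a single nonzero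
entry, in column `f i`, equal to `1/√(z_{f i})` where `z_j` is the number of rows
assigned to column `j`. -/
def IsIndicator {n k : ℕ} (X : Matrix (Fin n) (Fin k) ℝ) : Prop :=
  ∃ f : Fin n → Fin k, ∀ i j, X i j =
    if f i = j then 1 / Real.sqrt ((Finset.univ.filter fun i' => f i' = j).card) else 0

/-- The singular values of a `k × t` real matrix `M` (in some order): the square
roots of the eigenvalues of `M * Mᵀ`. -/
noncomputable def singVals {k t : ℕ} (M : Matrix (Fin k) (Fin t) ℝ) (i : Fin k) : ℝ :=
  Real.sqrt ((Matrix.isHermitian_mul_conjTranspose_self M).eigenvalues i)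

/-- The `d × t` random sign matrix with entries `±1/√t`, as a function of the
sample point `ω` (a `d × t` array of fair coins). -/
noncomputable def signMatrix (d t : ℕ) (ω : Fin d → Fin t → Bool) :
    Matrix (Fin d) (Fin t) ℝ :=
  Matrix.of fun i j => (if ω i j then (1 : ℝ) else -1) / Real.sqrt t

/-- The law of a `d × t` matrix of i.i.d. fair signs: the uniform probability
measure on all `d × t` sign patterns. -/
noncomputable def signMeasure (d t : ℕ) : Measure (Fin d → Fin t → Bool) :=
  (PMF.uniformOfFintype (Fin d → Fin t → Bool)).toMeasure


private theorem mp_right {k t : ℕ} (M : Matrix (Fin k) (Fin t) ℝ) (P : Matrix (Fin t) (Fin k) ℝ)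
    (hrank : M.rank = k) (h1 : M * P * M = M) : M * P = 1 := by
  have hsurj : Function.Surjective M.mulVecLin := by
    rw [← LinearMap.range_eq_top]
    apply Submodule.eq_top_of_finrank_eq
    rw [← Matrix.rank, hrank, Module.finrank_fin_fun]
  have key : ∀ v : Fin k → ℝ, (M * P) *ᵥ v = v := by
    intro v
    obtain ⟨x, hx⟩ := hsurj v
    have hx' : M *ᵥ x = v := hx
    calc (M * P) *ᵥ v = (M * P) *ᵥ (M *ᵥ x) := by rw [hx']
    _ = (M * P * M) *ᵥ x := by simp [Matrix.mulVec_mulVec]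
    _ = M *ᵥ x := by rw [h1]
    _ = v := hx'
  ext i j
  have := congrFun (key (Pi.single j 1)) i
  rw [Matrix.mulVec_single_one, Matrix.col_apply] at this
  rw [this, Matrix.one_apply, Pi.single_apply]

/-- A_k R (V_kᵀ R)⁺ V_kᵀ = A_k when V_kᵀ R has full rank k. -/
theorem statement12 (n d k ρ t : ℕ) (hkρ : k < ρ) (hρn : ρ ≤ n) (hρd : ρ ≤ d)
    (A : Matrix (Fin n) (Fin d) ℝ)
    (U : Matrix (Fin n) (Fin n) ℝ) (W : Matrix (Fin d) (Fin d) ℝ) (σ : ℕ → ℝ)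
    (hU : Uᵀ * U = 1) (hW : Wᵀ * W = 1)
    (hmono : ∀ i j : ℕ, i ≤ j → σ j ≤ σ i)
    (hpos : ∀ i : ℕ, i < ρ → 0 < σ i)
    (hzero : ∀ i : ℕ, ρ ≤ i → σ i = 0)
    (hA : A = U * (Matrix.of fun (i : Fin n) (j : Fin d) =>
      if (i : ℕ) = (j : ℕ) then σ i else 0) * Wᵀ)
    (Ak : Matrix (Fin n) (Fin d) ℝ)
    (hAk : Ak = U * (Matrix.of fun (i : Fin n) (j : Fin d) =>
      if (i : ℕ) = (j : ℕ) ∧ (i : ℕ) < k then σ i else 0) * Wᵀ)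
    (Vk : Matrix (Fin d) (Fin k) ℝ)
    (hVk : Vk = W.submatrix id (Fin.castLE (by omega)))
    (R : Matrix (Fin d) (Fin t) ℝ)
    (hrank : (Vkᵀ * R).rank = k)
    (P : Matrix (Fin t) (Fin k) ℝ) (hP : IsMoorePenrose (Vkᵀ * R) P) :
    Ak * R * P * Vkᵀ = Ak ∧ frobNorm (Ak - Ak * R * P * Vkᵀ) = 0 := by
  have hkd : k ≤ d := by omega
  set S : Matrix (Fin n) (Fin d) ℝ := Matrix.of fun (i : Fin n) (j : Fin d) =>
      if (i : ℕ) = (j : ℕ) ∧ (i : ℕ) < k then σ i else 0 with hS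
  set E : Matrix (Fin d) (Fin k) ℝ :=
    Matrix.of (fun i j => if (i : ℕ) = (j : ℕ) then (1:ℝ) else 0) with hE
  have hVkE : Vk = W * E := by
    ext i j
    have hcond : ∀ l : Fin d, ((l:ℕ) = (j:ℕ)) ↔ (l = Fin.castLE hkd j) := by
      intro l; rw [Fin.ext_iff]; simp
    rw [hVk]
    simp [Matrix.mul_apply, hE, hcond]
  have hG : ∀ l m : Fin d, (E * Eᵀ) l m =
      if (l:ℕ) = (m:ℕ) ∧ (l:ℕ) < k then (1:ℝ) else 0 := by
    intro l m
    rw [Matrix.mul_apply]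
    by_cases h : (l:ℕ) = (m:ℕ) ∧ (l:ℕ) < k
    · rw [if_pos h, Finset.sum_eq_single (⟨(l:ℕ), h.2⟩ : Fin k)]
      · simp [hE, h.1]
      · intro b _ hb
        have : (l:ℕ) ≠ (b:ℕ) := fun hc => hb (by simp [Fin.ext_iff, ← hc])
        simp [hE, this]
      · intro hc; exact absurd (Finset.mem_univ _) hc
    · rw [if_neg h]
      apply Finset.sum_eq_zero
      intro j _
      simp only [hE, Matrix.of_apply, Matrix.transpose_apply]
      split_ifs with h1 h2
      · exact absurd ⟨h1.trans h2.symm, h1 ▸ j.isLt⟩ h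
      all_goals simp
  have hSEE : S * (E * Eᵀ) = S := by
    ext i j
    rw [Matrix.mul_apply, Finset.sum_eq_single j]
    · rw [hG]
      by_cases hj : (j:ℕ) < k
      · simp [hj]
      · have : S i j = 0 := by
          simp only [hS, Matrix.of_apply]
          rw [if_neg]; rintro ⟨h1, h2⟩; exact hj (h1 ▸ h2)
        simp [hj, this]
    · intro b _ hb
      rw [hG, if_neg]
      · simp
      · rintro ⟨h1, _⟩; exact hb (Fin.ext h1)
    · intro hc; exact absurd (Finset.mem_univ _) hc
  have hAkVV : Ak * (Vk * Vkᵀ) = Ak := by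
    rw [hAk, hVkE, Matrix.transpose_mul]
    simp only [Matrix.mul_assoc]
    rw [← Matrix.mul_assoc Wᵀ W, hW, Matrix.one_mul,
      ← Matrix.mul_assoc E Eᵀ Wᵀ, ← Matrix.mul_assoc S (E * Eᵀ) Wᵀ, hSEE]
  have hMP : Vkᵀ * R * P = 1 := mp_right _ _ hrank hP.1
  have h2 : Vkᵀ * (R * (P * Vkᵀ)) = Vkᵀ := by
    rw [← Matrix.mul_assoc, ← Matrix.mul_assoc, hMP, Matrix.one_mul]
  have hmain : Ak * R * P * Vkᵀ = Ak := by
    conv_lhs => rw [← hAkVV]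
    simp only [Matrix.mul_assoc]
    rw [h2]; exact hAkVV
  refine ⟨hmain, ?_⟩
  rw [hmain, sub_self]
  simp [frobNorm]
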